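/- Let f be bounded, nondecreasing and satisfy (H1). There exist C > 0 and ε₀ > 0 such that for every ε ∈ (0, ε₀) and every maximizer ζ^ε of E_ε over A, one has E_ε(ζ^ε) ≥ (κ²/(4π))·log(1/ε) − C. -/

import Mathlib

open MeasureTheory Real Filter
open scoped ENNReal Topology

noncomputable section

abbrev Pt : Type := EuclideanSpace ℝ (Fin 2)

/-- The point (a, b) in the plane. -/
def pt (a b : ℝ) : Pt := WithLp.toLp 2 ![a, b]

/-- The open right half plane Π. -/
def halfPlane : Set Pt := {x | 0 < x 0}

/-- Reflection across the x₂-axis: x ↦ x̄. -/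
def reflect (x : Pt) : Pt := pt (-(x 0)) (x 1)

/-- Reflection across the x₁-axis. -/
def flip2 (x : Pt) : Pt := pt (x 0) (-(x 1))

/-- Green's function of -Δ in the half plane with zero Dirichlet data. -/
def G (x y : Pt) : ℝ := (1 / (2 * π)) * Real.log (dist (reflect x) y / dist x y)

/-- Green's operator. -/
def Gop (ζ : Pt → ℝ) (x : Pt) : ℝ := ∫ y in halfPlane, G x y * ζ y

/-- The rectangle D. -/
def Dset (r : ℝ) : Set Pt := {x | r/2 < x 0 ∧ x 0 < 2*r ∧ -1 < x 1 ∧ x 1 < 1}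

/-- The admissible class A. -/
structure InA (r κ : ℝ) (ζ : Pt → ℝ) : Prop where
  measurable : Measurable ζ
  essBdd : ∃ M : ℝ, ∀ᵐ x ∂(volume : Measure Pt), |ζ x| ≤ M
  nonneg : ∀ᵐ x ∂(volume : Measure Pt), 0 ≤ ζ x
  mass_le : (∫ x in halfPlane, ζ x) ≤ κ
  support_ae : ∀ᵐ x ∂(volume : Measure Pt), x ∉ Dset r → ζ x = 0

/-- F(s) = ∫₀ˢ f(t) dt. -/
def Fint (f : ℝ → ℝ) (s : ℝ) : ℝ := ∫ t in (0:ℝ)..s, f t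

/-- The convex conjugate J of F, with values in [0, +∞] (note J ≥ 0 since F(0) = 0). -/
def Jconj (f : ℝ → ℝ) (s : ℝ) : ℝ≥0∞ := ⨆ t : ℝ, ENNReal.ofReal (s * t - Fint f t)

/-- The energy functional E_ε, with values in [-∞, +∞). -/
def energy (f : ℝ → ℝ) (r W ε : ℝ) (ζ : Pt → ℝ) : EReal :=
  (((1/2) * (∫ x in Dset r, ζ x * Gop ζ x) - W * ∫ x in Dset r, (x 0) * ζ x : ℝ) : EReal)
  - ((ENNReal.ofReal (ε⁻¹ ^ 2) * ∫⁻ x in Dset r, Jconj f (ε^2 * ζ x) : ℝ≥0∞) : EReal)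

/-- Steiner symmetry with respect to the line x₂ = 0. -/
def SteinerSym (ζ : Pt → ℝ) : Prop :=
  (∀ᵐ x ∂(volume : Measure Pt), ζ (flip2 x) = ζ x) ∧
  (∀ᵐ x₁ ∂(volume : Measure ℝ), ∃ g : ℝ → ℝ,
      (∀ᵐ x₂ ∂(volume : Measure ℝ), ζ (pt x₁ x₂) = g x₂) ∧
      ∀ s t : ℝ, |s| ≤ |t| → g t ≤ g s)

/-- Hypothesis (H1). -/
def H1 (f : ℝ → ℝ) : Prop := (∀ s ≤ 0, f s = 0) ∧ ∀ s, 0 < s → 0 < f s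

/-- ζ is a maximizer of E_ε over A. -/
def IsMaximizer (f : ℝ → ℝ) (r W κ ε : ℝ) (ζ : Pt → ℝ) : Prop :=
  InA r κ ζ ∧ ∀ ζ', InA r κ ζ' → energy f r W ε ζ' ≤ energy f r W ε ζ

/-- μ is a Lagrange multiplier for ζ. -/
def IsLM (f : ℝ → ℝ) (r W ε : ℝ) (ζ : Pt → ℝ) (μ : ℝ) : Prop :=
  0 ≤ μ ∧ ∀ᵐ x ∂(volume : Measure Pt), x ∈ Dset r →
    ζ x = ε⁻¹^2 * f (Gop ζ x - W * x 0 - μ)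

/-- The essential support of ζ. -/
def essSupport (ζ : Pt → ℝ) : Set Pt :=
  {x | ∀ U ∈ nhds x, volume {y ∈ U | ζ y ≠ 0} ≠ 0}

/-- The odd extension of ζ across the x₂-axis. -/
def oddExt (ζ : Pt → ℝ) (x : Pt) : ℝ :=
  if 0 < x 0 then ζ x else if x 0 < 0 then -(ζ (reflect x)) else 0

/-- The truncated nonlinearity f_ρ. -/
def ftr (f : ℝ → ℝ) (ρ : ℝ) (s : ℝ) : ℝ := min (f s) (f ρ)

/-- A (Steiner-symmetric) maximizer of the truncated energy E_{ε,ρ} over A, together with a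
Lagrange multiplier μ, solving the truncated equation on the half plane with total mass κ. -/
def IsTruncMax (f : ℝ → ℝ) (r W κ ε ρ : ℝ) (ζ : Pt → ℝ) (μ : ℝ) : Prop :=
  InA r κ ζ ∧ SteinerSym ζ ∧
  (∀ ζ', InA r κ ζ' → energy (ftr f ρ) r W ε ζ' ≤ energy (ftr f ρ) r W ε ζ) ∧
  0 ≤ μ ∧
  (∀ᵐ x ∂(volume : Measure Pt), x ∈ halfPlane →
     ζ x = ε⁻¹^2 * ftr f ρ (Gop ζ x - W * x 0 - μ)) ∧
  (∫ x in halfPlane, ζ x) = κ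

/-! ### Auxiliary material -/

open Set intervalIntegral

section Aux

/-- The canonical measurable equiv from the plane to `ℝ × ℝ`. -/
def Tmap : Pt ≃ᵐ ℝ × ℝ :=
  (MeasurableEquiv.toLp 2 (Fin 2 → ℝ)).symm.trans (MeasurableEquiv.finTwoArrow)

lemma Tmap_apply (x : Pt) : Tmap x = (x 0, x 1) := rfl

lemma Tmap_mp : MeasurePreserving Tmap volume volume :=
  (EuclideanSpace.volume_preserving_symm_measurableEquiv_toLp (Fin 2)).trans
    (volume_preserving_finTwoArrow ℝ)

/-- Open rectangles in the plane. -/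
def Rect (a b c d : ℝ) : Set Pt := {x | a < x 0 ∧ x 0 < b ∧ c < x 1 ∧ x 1 < d}

lemma Rect_eq (a b c d : ℝ) : Rect a b c d = Tmap ⁻¹' (Ioo a b ×ˢ Ioo c d) := by
  ext x
  simp [Rect, Tmap_apply, and_assoc]

lemma measurableSet_Rect (a b c d : ℝ) : MeasurableSet (Rect a b c d) := by
  rw [Rect_eq]; exact Tmap.measurable (measurableSet_Ioo.prod measurableSet_Ioo)

lemma volume_Rect (a b c d : ℝ) :
    volume (Rect a b c d) = ENNReal.ofReal (b - a) * ENNReal.ofReal (d - c) := by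
  rw [Rect_eq, Tmap_mp.measure_preimage
      ((measurableSet_Ioo.prod measurableSet_Ioo)).nullMeasurableSet,
    Measure.volume_eq_prod, Measure.prod_prod, Real.volume_Ioo, Real.volume_Ioo]

lemma setIntegral_Rect (a b c d : ℝ) (g : ℝ × ℝ → ℝ) :
    (∫ x in Rect a b c d, g (Tmap x)) = ∫ p in Ioo a b ×ˢ Ioo c d, g p := by
  rw [Rect_eq]
  exact Tmap_mp.setIntegral_preimage_emb Tmap.measurableEmbedding _ _

lemma integrableOn_Rect (a b c d : ℝ) (g : ℝ × ℝ → ℝ) :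
    IntegrableOn (fun x => g (Tmap x)) (Rect a b c d) volume ↔
      IntegrableOn g (Ioo a b ×ˢ Ioo c d) volume := by
  rw [Rect_eq]
  exact Tmap_mp.integrableOn_comp_preimage Tmap.measurableEmbedding

lemma volume_singleton_pt (x : Pt) : volume ({x} : Set Pt) = 0 := by
  have h : ({x} : Set Pt) = Tmap ⁻¹' ({x 0} ×ˢ {x 1}) := by
    ext y
    simp only [Set.mem_singleton_iff, Set.mem_preimage, Tmap_apply, Set.mem_prod]
    constructor
    · rintro rfl; exact ⟨rfl, rfl⟩
    · rintro ⟨h0, h1⟩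
      ext i
      fin_cases i <;> assumption
  rw [h, Tmap_mp.measure_preimage ((measurableSet_singleton _).prod
      (measurableSet_singleton _)).nullMeasurableSet, Measure.volume_eq_prod,
    Measure.prod_prod]
  simp

lemma volume_line_pt (t : ℝ) : volume ({y : Pt | y 0 = t}) = 0 := by
  have h : ({y : Pt | y 0 = t}) = Tmap ⁻¹' ({t} ×ˢ (univ : Set ℝ)) := by
    ext y; simp [Tmap_apply, eq_comm]
  rw [h, Tmap_mp.measure_preimage ((measurableSet_singleton _).prod
      MeasurableSet.univ).nullMeasurableSet, Measure.volume_eq_prod, Measure.prod_prod]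
  simp

lemma dist_coords (x y : Pt) :
    dist x y = Real.sqrt ((x 0 - y 0)^2 + (x 1 - y 1)^2) := by
  rw [EuclideanSpace.dist_eq]
  simp [Fin.sum_univ_two, Real.dist_eq, sq_abs]

lemma pt_apply_zero (a b : ℝ) : (pt a b) 0 = a := rfl
lemma pt_apply_one (a b : ℝ) : (pt a b) 1 = b := rfl

lemma G_eq (x y : Pt) :
    G x y = (1/(2*π)) * Real.log
      (Real.sqrt ((x 0 + y 0)^2 + (x 1 - y 1)^2) /
        Real.sqrt ((x 0 - y 0)^2 + (x 1 - y 1)^2)) := by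
  rw [G, dist_coords, dist_coords]
  have h0 : reflect x 0 = -(x 0) := rfl
  have h1 : reflect x 1 = x 1 := rfl
  rw [h0, h1]
  congr 3
  ring

lemma measurable_coord0 : Measurable fun x : Pt => x 0 := by
  have h : (fun x : Pt => x 0) = fun x => (Tmap x).1 := rfl
  rw [h]; exact measurable_fst.comp Tmap.measurable

lemma measurable_coord1 : Measurable fun x : Pt => x 1 := by
  have h : (fun x : Pt => x 1) = fun x => (Tmap x).2 := rfl
  rw [h]; exact measurable_snd.comp Tmap.measurable

lemma measurableSet_halfPlane : MeasurableSet halfPlane :=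
  measurableSet_lt measurable_const measurable_coord0

lemma measurable_uncurry_G : Measurable (Function.uncurry G) := by
  have h : Function.uncurry G = fun q : Pt × Pt => (1/(2*π)) * Real.log
      (Real.sqrt ((q.1 0 + q.2 0)^2 + (q.1 1 - q.2 1)^2) /
        Real.sqrt ((q.1 0 - q.2 0)^2 + (q.1 1 - q.2 1)^2)) := by
    funext q
    exact G_eq q.1 q.2
  rw [h]
  have m10 : Measurable fun q : Pt × Pt => q.1 0 := measurable_coord0.comp measurable_fst
  have m11 : Measurable fun q : Pt × Pt => q.1 1 := measurable_coord1.comp measurable_fst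
  have m20 : Measurable fun q : Pt × Pt => q.2 0 := measurable_coord0.comp measurable_snd
  have m21 : Measurable fun q : Pt × Pt => q.2 1 := measurable_coord1.comp measurable_snd
  refine Measurable.const_mul (Real.measurable_log.comp (Measurable.div ?_ ?_)) _
  · exact Real.continuous_sqrt.measurable.comp
      (((m10.add m20).pow_const 2).add ((m11.sub m21).pow_const 2))
  · exact Real.continuous_sqrt.measurable.comp
      (((m10.sub m20).pow_const 2).add ((m11.sub m21).pow_const 2))

end Aux

section OneD

lemma abs_log_le (x : ℝ) (hx : 0 < x) (hx1 : x ≤ 1) : |Real.log x| ≤ 2 * x ^ (-(1/2) : ℝ) := by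
  have h1 : Real.log x ≤ 0 := Real.log_nonpos hx.le hx1
  rw [abs_of_nonpos h1]
  have h2 : Real.log (x ^ (-(1/2) : ℝ)) = -(1/2) * Real.log x := Real.log_rpow hx _
  have h3 : Real.log (x ^ (-(1/2) : ℝ)) ≤ x ^ (-(1/2) : ℝ) - 1 :=
    Real.log_le_sub_one_of_pos (Real.rpow_pos_of_pos hx _)
  nlinarith [Real.rpow_pos_of_pos hx (-(1/2) : ℝ)]

lemma ii_log_small (m : ℝ) (hm : 0 ≤ m) (hm1 : m ≤ 1) :
    IntervalIntegrable Real.log volume 0 m := by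
  rw [intervalIntegrable_iff_integrableOn_Ioc_of_le hm]
  have hrp : IntegrableOn (fun x : ℝ => 2 * x ^ (-(1/2) : ℝ)) (Ioc 0 m) volume := by
    have h := (intervalIntegrable_rpow' (a := 0) (b := m) (r := (-(1/2) : ℝ)) (by norm_num))
    rw [intervalIntegrable_iff_integrableOn_Ioc_of_le hm] at h
    exact h.const_mul 2
  refine Integrable.mono hrp Real.measurable_log.aestronglyMeasurable ?_
  filter_upwards [ae_restrict_mem measurableSet_Ioc] with x hx
  have hb : |Real.log x| ≤ 2 * x ^ (-(1/2) : ℝ) := abs_log_le x hx.1 (hx.2.trans hm1)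
  have h2 : (0:ℝ) ≤ 2 * x ^ (-(1/2):ℝ) := mul_nonneg (by norm_num) (Real.rpow_nonneg hx.1.le _)
  rw [Real.norm_eq_abs, Real.norm_eq_abs, abs_of_nonneg h2]
  exact hb

lemma ii_log_nonneg (m : ℝ) (hm : 0 ≤ m) : IntervalIntegrable Real.log volume 0 m := by
  rcases le_total m 1 with hm1 | hm1
  · exact ii_log_small m hm hm1
  · refine (ii_log_small 1 zero_le_one le_rfl).trans ?_
    refine intervalIntegrable_log ?_
    rw [Set.uIcc_of_le hm1]
    intro h
    exact absurd h.1 (by norm_num)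

lemma ii_log_all (m : ℝ) : IntervalIntegrable Real.log volume 0 m := by
  rcases le_total 0 m with hm | hm
  · exact ii_log_nonneg m hm
  · have h := (IntervalIntegrable.iff_comp_neg).mp (ii_log_nonneg (-m) (by linarith))
    simp only [neg_zero, neg_neg] at h
    refine h.congr ?_
    intro x _
    exact Real.log_neg_eq_log x

lemma ii_log_any (c d : ℝ) : IntervalIntegrable Real.log volume c d :=
  ((ii_log_all c).symm).trans (ii_log_all d)

lemma ii_log_abs (t c d : ℝ) :
    IntervalIntegrable (fun a => Real.log (abs (t - a))) volume c d := by
  have h := (ii_log_any (t - c) (t - d)).comp_sub_left t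
  simp only [sub_sub_cancel] at h
  refine h.congr ?_
  intro x _
  exact (Real.log_abs _).symm

/-- An absolute constant bounding local integrals of `|log|`. -/
def Bconst : ℝ := ∫ u in (-1:ℝ)..1, abs (Real.log (abs u))

lemma ii_log_abs0 (c d : ℝ) :
    IntervalIntegrable (fun a => abs (Real.log (abs a))) volume c d := by
  simpa using (ii_log_abs 0 c d).abs

lemma oneD_bound (t c d : ℝ) (htc : c ≤ t) (htd : t ≤ d) (hlen : d - c ≤ 1) :
    (∫ a in Ioo c d, abs (Real.log (abs (t - a)))) ≤ Bconst := by
  have hcd : c ≤ d := htc.trans htd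
  rw [← MeasureTheory.integral_Ioc_eq_integral_Ioo, ← intervalIntegral.integral_of_le hcd]
  have h1 : (∫ a in c..d, abs (Real.log (abs (t - a))))
      = ∫ u in (t - d)..(t - c), abs (Real.log (abs u)) := by
    simpa using intervalIntegral.integral_comp_sub_left (fun u => abs (Real.log (abs u))) t
  rw [h1]
  refine intervalIntegral.integral_mono_interval (by linarith) (by linarith) (by linarith)
    ?_ (ii_log_abs0 (-1) 1)
  filter_upwards [] with x
  positivity

end OneD

section Core
variable {r l x0 x1 y0 y1 : ℝ}

lemma G_core_lb (hr : 0 < r) (hl : 0 < l) (hl2 : l ≤ 1/2)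
    (hx0 : r < x0) (hx0' : x0 < r + l) (hy0 : r < y0) (hy0' : y0 < r + l)
    (hx1 : 0 < x1) (hx1' : x1 < l) (hy1 : 0 < y1) (hy1' : y1 < l)
    (hne : Real.sqrt ((x0 - y0)^2 + (x1 - y1)^2) ≠ 0) :
    Real.log (r / l) ≤
      Real.log (Real.sqrt ((x0 + y0)^2 + (x1 - y1)^2) /
        Real.sqrt ((x0 - y0)^2 + (x1 - y1)^2)) := by
  set dd := Real.sqrt ((x0 - y0)^2 + (x1 - y1)^2) with hdd
  set dR := Real.sqrt ((x0 + y0)^2 + (x1 - y1)^2) with hdR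
  have hddpos : 0 < dd := lt_of_le_of_ne (Real.sqrt_nonneg _) (Ne.symm hne)
  have hdd_le : dd ≤ 2 * l := by
    rw [hdd]
    have h1 : (x0 - y0)^2 + (x1 - y1)^2 ≤ (2*l)^2 := by nlinarith
    calc Real.sqrt ((x0 - y0)^2 + (x1 - y1)^2) ≤ Real.sqrt ((2*l)^2) := Real.sqrt_le_sqrt h1
      _ = 2*l := Real.sqrt_sq (by linarith)
  have hdR_ge : 2 * r ≤ dR := by
    rw [hdR]
    calc (2*r : ℝ) = Real.sqrt ((2*r)^2) := (Real.sqrt_sq (by linarith)).symm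
      _ ≤ _ := Real.sqrt_le_sqrt (by nlinarith)
  refine Real.log_le_log (by positivity) ?_
  rw [div_le_div_iff₀ hl hddpos]
  nlinarith

lemma G_core_ub (hr : 0 < r) (hl : 0 < l) (hlr : l ≤ r) (hl2 : l ≤ 1/2)
    (hx0 : r < x0) (hx0' : x0 < r + l) (hy0 : r < y0) (hy0' : y0 < r + l)
    (hx1 : 0 < x1) (hx1' : x1 < l) (hy1 : 0 < y1) (hy1' : y1 < l)
    (hne : y0 ≠ x0) :
    |Real.log (Real.sqrt ((x0 + y0)^2 + (x1 - y1)^2) /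
        Real.sqrt ((x0 - y0)^2 + (x1 - y1)^2))| ≤
      (abs (Real.log (2*r)) + abs (Real.log (4*r+1))) + abs (Real.log (abs (x0 - y0))) := by
  set dd := Real.sqrt ((x0 - y0)^2 + (x1 - y1)^2) with hdd
  set dR := Real.sqrt ((x0 + y0)^2 + (x1 - y1)^2) with hdR
  have habs : 0 < |x0 - y0| := by
    rw [abs_pos]; intro h; exact hne (by linarith [sub_eq_zero.mp h])
  have habs1 : |x0 - y0| ≤ 1/2 := by
    rw [abs_le]; constructor <;> nlinarith
  have hdd_lb : |x0 - y0| ≤ dd := by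
    rw [hdd]
    calc |x0 - y0| = Real.sqrt ((x0 - y0)^2) := (Real.sqrt_sq_eq_abs _).symm
      _ ≤ _ := Real.sqrt_le_sqrt (by nlinarith)
  have hddpos : 0 < dd := lt_of_lt_of_le habs hdd_lb
  have hdd_ub : dd ≤ 1 := by
    rw [hdd]
    calc Real.sqrt ((x0 - y0)^2 + (x1 - y1)^2) ≤ Real.sqrt 1 := Real.sqrt_le_sqrt (by nlinarith)
      _ = 1 := Real.sqrt_one
  have hdR_ge : 2 * r ≤ dR := by
    rw [hdR]
    calc (2*r : ℝ) = Real.sqrt ((2*r)^2) := (Real.sqrt_sq (by linarith)).symm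
      _ ≤ _ := Real.sqrt_le_sqrt (by nlinarith)
  have hdR_ub : dR ≤ 4*r + 1 := by
    rw [hdR]
    calc Real.sqrt ((x0 + y0)^2 + (x1 - y1)^2) ≤ Real.sqrt ((4*r+1)^2) :=
        Real.sqrt_le_sqrt (by nlinarith)
      _ = 4*r+1 := Real.sqrt_sq (by linarith)
  have hdRpos : 0 < dR := lt_of_lt_of_le (by linarith) hdR_ge
  rw [Real.log_div (ne_of_gt hdRpos) (ne_of_gt hddpos)]
  have h1 : |Real.log dR| ≤ abs (Real.log (2*r)) + abs (Real.log (4*r+1)) := by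
    rw [abs_le]
    constructor
    · have h0 := Real.log_le_log (by linarith) hdR_ge
      have h2 : -(abs (Real.log (2*r))) ≤ Real.log (2*r) := neg_abs_le _
      have h3 : (0:ℝ) ≤ abs (Real.log (4*r+1)) := abs_nonneg _
      linarith
    · have h0 := Real.log_le_log hdRpos hdR_ub
      have h2 : Real.log (4*r+1) ≤ abs (Real.log (4*r+1)) := le_abs_self _
      have h3 : (0:ℝ) ≤ abs (Real.log (2*r)) := abs_nonneg _
      linarith
  have h2 : |Real.log dd| ≤ abs (Real.log (abs (x0 - y0))) := by
    have ha : Real.log (abs (x0 - y0)) ≤ Real.log dd := Real.log_le_log habs hdd_lb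
    have hb : Real.log dd ≤ 0 := Real.log_nonpos hddpos.le hdd_ub
    have hc : Real.log (abs (x0 - y0)) ≤ 0 := ha.trans hb
    rw [abs_of_nonpos hb, abs_of_nonpos hc]
    linarith
  calc |Real.log dR - Real.log dd| ≤ |Real.log dR| + |Real.log dd| := abs_sub _ _
    _ ≤ _ := by linarith

end Core

section FJ
variable {f : ℝ → ℝ}

lemma Fint_of_nonpos (hf1 : H1 f) {t : ℝ} (ht : t ≤ 0) : Fint f t = 0 := by
  rw [Fint, intervalIntegral.integral_symm]
  have h : EqOn f (fun _ => (0:ℝ)) (Set.uIcc t 0) := by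
    intro u hu
    rw [Set.uIcc_of_le ht] at hu
    exact hf1.1 u hu.2
  rw [intervalIntegral.integral_congr h]
  simp

lemma f_nonneg (hf : Monotone f) (hf1 : H1 f) (t : ℝ) : 0 ≤ f t := by
  rcases le_total t 0 with ht | ht
  · rw [hf1.1 t ht]
  · rw [← hf1.1 0 le_rfl]; exact hf ht

lemma Fint_nonneg (hf : Monotone f) (hf1 : H1 f) (t : ℝ) : 0 ≤ Fint f t := by
  rcases le_total t 0 with ht | ht
  · rw [Fint_of_nonpos hf1 ht]
  · exact intervalIntegral.integral_nonneg ht (fun u _ => f_nonneg hf hf1 u)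

lemma Jconj_zero (hf : Monotone f) (hf1 : H1 f) : Jconj f 0 = 0 := by
  rw [Jconj]
  refine le_antisymm (iSup_le fun t => ?_) (zero_le)
  rw [ENNReal.ofReal_eq_zero.mpr]
  have := Fint_nonneg hf hf1 t
  linarith

lemma Jbound (hf : Monotone f) (hf1 : H1 f) (t : ℝ) : f 1 * t - Fint f t ≤ f 1 := by
  have hs0 : 0 ≤ f 1 := f_nonneg hf hf1 1
  rcases le_total t 0 with ht | ht
  · rw [Fint_of_nonpos hf1 ht]
    nlinarith
  · rcases le_total t 1 with ht1 | ht1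
    · have := Fint_nonneg hf hf1 t
      nlinarith
    · have hint : ∀ a b : ℝ, IntervalIntegrable f volume a b := fun a b =>
        hf.intervalIntegrable
      have hsplit : Fint f t = Fint f 1 + ∫ u in (1:ℝ)..t, f u := by
        rw [Fint, Fint, intervalIntegral.integral_add_adjacent_intervals (hint 0 1) (hint 1 t)]
      have hmono : (∫ u in (1:ℝ)..t, (f 1)) ≤ ∫ u in (1:ℝ)..t, f u := by
        refine intervalIntegral.integral_mono_on ht1 ?_ (hint 1 t) ?_
        · exact intervalIntegrable_const
        · exact fun u hu => hf hu.1
      have hconst : (∫ u in (1:ℝ)..t, (f 1)) = (t - 1) * f 1 := by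
        simp [intervalIntegral.integral_const, smul_eq_mul]
      have hF1 := Fint_nonneg hf hf1 1
      rw [hsplit]
      nlinarith [hmono, hconst]

lemma Jconj_le (hf : Monotone f) (hf1 : H1 f) :
    Jconj f (f 1) ≤ ENNReal.ofReal (f 1) :=
  iSup_le fun t => ENNReal.ofReal_le_ofReal (Jbound hf hf1 t)

end FJ

set_option maxHeartbeats 1000000 in
theorem statement_5
    (r κ W : ℝ) (hr : 0 < r) (hκ : 0 < κ) (hW : W = κ / (4 * π * r))
    (f : ℝ → ℝ) (hf : Monotone f) (hfb : ∃ M, ∀ s, |f s| ≤ M) (hf1 : H1 f) :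
    ∃ C > (0:ℝ), ∃ ε₀ > (0:ℝ), ∀ ε : ℝ, 0 < ε → ε < ε₀ →
      ∀ ζε, IsMaximizer f r W κ ε ζε →
        ((κ ^ 2 / (4 * π) * Real.log (1 / ε) - C : ℝ) : EReal) ≤ energy f r W ε ζε := by
  have hπ : (0:ℝ) < π := Real.pi_pos
  have hW0 : 0 < W := by rw [hW]; positivity
  set s := f 1 with hs_def
  have hs : 0 < s := hf1.2 1 one_pos
  set δ := Real.sqrt (κ / s) with hδ_def
  have hδpos : 0 < δ := Real.sqrt_pos.mpr (by positivity)
  have hδsq : δ^2 = κ / s := Real.sq_sqrt (by positivity)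
  set C := κ^2/(4*π) * |Real.log r - Real.log δ| + 2*r*W*κ + κ + 1 with hC_def
  have hCpos : 0 < C := by
    rw [hC_def]
    have h1 : 0 ≤ κ^2/(4*π) * |Real.log r - Real.log δ| := by positivity
    have h2 : 0 < 2*r*W*κ := by
      have := mul_pos (mul_pos (mul_pos two_pos hr) hW0) hκ
      linarith
    linarith
  refine ⟨C, hCpos, min r (1/2) / δ, by positivity, ?_⟩
  intro ε hε hεlt ζε hmax
  -- the test configuration
  set l := δ * ε with hl_def
  have hl : 0 < l := mul_pos hδpos hε
  have hlm : l < min r (1/2) := by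
    rw [hl_def, mul_comm δ ε]
    exact (lt_div_iff₀ hδpos).mp hεlt
  have hlr : l ≤ r := le_of_lt (lt_of_lt_of_le hlm (min_le_left _ _))
  have hl2 : l ≤ 1/2 := le_of_lt (lt_of_lt_of_le hlm (min_le_right _ _))
  set c := s / ε^2 with hc_def
  have hc : 0 < c := by positivity
  have hκeq : c * (l*l) = κ := by
    rw [hc_def, hl_def]
    have h1 : δ * ε * (δ * ε) = δ^2 * ε^2 := by ring
    rw [h1, hδsq]
    field_simp
  set Q := Rect r (r+l) 0 l with hQ_def
  have hQmeas : MeasurableSet Q := measurableSet_Rect r (r+l) 0 l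
  have hvolQ : volume Q = ENNReal.ofReal l * ENNReal.ofReal l := by
    rw [hQ_def, volume_Rect]
    congr 1 <;> congr 1 <;> ring
  have hQfin : volume Q < ⊤ := by
    rw [hvolQ]; exact ENNReal.mul_lt_top ENNReal.ofReal_lt_top ENNReal.ofReal_lt_top
  have hvolQt : (volume Q).toReal = l * l := by
    rw [hvolQ, ENNReal.toReal_mul, ENNReal.toReal_ofReal hl.le]
  have hQsubD : Q ⊆ Dset r := by
    rintro x ⟨h1, h2, h3, h4⟩
    exact ⟨by linarith, by linarith, by linarith, by linarith⟩
  have hQsubH : Q ⊆ halfPlane := by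
    rintro x ⟨h1, _, _, _⟩
    exact lt_trans hr h1
  have hDmeas : MeasurableSet (Dset r) := measurableSet_Rect (r/2) (2*r) (-1) 1
  set ζ' : Pt → ℝ := Q.indicator (fun _ => c) with hζ'_def
  have hζm : Measurable ζ' := measurable_const.indicator hQmeas
  -- mass
  have hmass : (∫ x in halfPlane, ζ' x) = κ := by
    rw [hζ'_def, MeasureTheory.setIntegral_indicator hQmeas,
      Set.inter_eq_right.mpr hQsubH, MeasureTheory.setIntegral_const, measureReal_def, hvolQt,
      smul_eq_mul, mul_comm]
    exact hκeq
  have hInA : InA r κ ζ' := by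
    refine ⟨hζm, ⟨c, Filter.Eventually.of_forall fun x => ?_⟩,
      Filter.Eventually.of_forall fun x => ?_, le_of_eq hmass,
      Filter.Eventually.of_forall fun x hx => ?_⟩
    · rw [hζ'_def]
      by_cases hx : x ∈ Q
      · rw [Set.indicator_of_mem hx, abs_of_pos hc]
      · rw [Set.indicator_of_notMem hx]; simpa using hc.le
    · rw [hζ'_def]
      exact Set.indicator_nonneg (fun _ _ => hc.le) x
    · rw [hζ'_def, Set.indicator_of_notMem (fun hQ => hx (hQsubD hQ))]
  -- notation for the key constant
  set CR := abs (Real.log (2*r)) + abs (Real.log (4*r+1)) with hCR_def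
  set Lb : ℝ := (1/(2*π)) * Real.log (r/l) with hLb_def
  set S := Ioo r (r+l) ×ˢ Ioo (0:ℝ) l with hS_def
  have hSmeas : MeasurableSet S := measurableSet_Ioo.prod measurableSet_Ioo
  have hvolS : (volume : Measure (ℝ × ℝ)) S = ENNReal.ofReal l * ENNReal.ofReal l := by
    rw [hS_def, Measure.volume_eq_prod, Measure.prod_prod, Real.volume_Ioo, Real.volume_Ioo]
    congr 2 <;> ring
  have hSfin : (volume : Measure (ℝ × ℝ)) S < ⊤ := by
    rw [hvolS]; exact ENNReal.mul_lt_top ENNReal.ofReal_lt_top ENNReal.ofReal_lt_top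
  -- 1D majorant facts (for fixed first coordinate t of a point of Q)
  have h1D : ∀ t : ℝ, IntegrableOn (fun a => abs (Real.log (abs (t - a)))) (Ioo r (r+l)) volume := by
    intro t
    have h := (ii_log_abs t r (r+l)).abs
    rw [intervalIntegrable_iff_integrableOn_Ioc_of_le (by linarith)] at h
    exact h.mono_set Set.Ioo_subset_Ioc_self
  -- the product-side majorant
  have hmajS : ∀ t : ℝ, IntegrableOn
      (fun p : ℝ × ℝ => (1/(2*π)) * (CR + abs (Real.log (abs (t - p.1))))) S volume := by
    intro t
    rw [hS_def, IntegrableOn, Measure.volume_eq_prod, ← Measure.prod_restrict]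
    have hψ : Integrable (fun a => CR + abs (Real.log (abs (t - a))))
        (volume.restrict (Ioo r (r+l))) := by
      refine Integrable.add ?_ (h1D t)
      refine integrableOn_const (C := CR) (lt_top_iff_ne_top.1 ?_)
      rw [Real.volume_Ioo]
      exact ENNReal.ofReal_lt_top
    have hone : Integrable (fun _ : ℝ => (1:ℝ)) (volume.restrict (Ioo (0:ℝ) l)) := by
      refine integrableOn_const (C := (1:ℝ)) (lt_top_iff_ne_top.1 ?_)
      rw [Real.volume_Ioo]
      exact ENNReal.ofReal_lt_top
    have := (hψ.mul_prod hone).const_mul (1/(2*π))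
    simpa using this
  -- measurability of the coordinate form of G
  have hgm : ∀ t0 t1 : ℝ, Measurable (fun p : ℝ × ℝ => (1/(2*π)) * Real.log
      (Real.sqrt ((t0 + p.1)^2 + (t1 - p.2)^2) / Real.sqrt ((t0 - p.1)^2 + (t1 - p.2)^2))) := by
    intro t0 t1
    refine Measurable.const_mul (Real.measurable_log.comp (Measurable.div ?_ ?_)) _
    · exact Real.continuous_sqrt.measurable.comp
        (((measurable_const.add measurable_fst).pow_const 2).add
          ((measurable_const.sub measurable_snd).pow_const 2))
    · exact Real.continuous_sqrt.measurable.comp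
        (((measurable_const.sub measurable_fst).pow_const 2).add
          ((measurable_const.sub measurable_snd).pow_const 2))
  -- a.e. avoidance of the vertical line through x
  have hlineS : ∀ t : ℝ, ∀ᵐ p : ℝ × ℝ ∂volume, p.1 ≠ t := by
    intro t
    have h0 : (volume : Measure (ℝ × ℝ)) {p : ℝ × ℝ | p.1 = t} = 0 := by
      have he : {p : ℝ × ℝ | p.1 = t} = ({t} : Set ℝ) ×ˢ (univ : Set ℝ) := by
        ext p
        simp only [Set.mem_setOf_eq, Set.mem_prod, Set.mem_singleton_iff, Set.mem_univ, and_true]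
      rw [he, Measure.volume_eq_prod, Measure.prod_prod]
      simp
    rw [ae_iff]
    simpa [not_not] using h0
  -- integrability of the Green function over Q, in product coordinates
  have hGS : ∀ x ∈ Q, IntegrableOn (fun p : ℝ × ℝ => (1/(2*π)) * Real.log
      (Real.sqrt ((x 0 + p.1)^2 + (x 1 - p.2)^2) /
        Real.sqrt ((x 0 - p.1)^2 + (x 1 - p.2)^2))) S volume := by
    rintro x ⟨hx0, hx0', hx1, hx1'⟩
    refine Integrable.mono' (hmajS (x 0)) ((hgm (x 0) (x 1)).aestronglyMeasurable) ?_
    filter_upwards [ae_restrict_mem hSmeas, ae_restrict_of_ae (hlineS (x 0))] with p hp hpne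
    obtain ⟨⟨hp1, hp2⟩, hp3, hp4⟩ := hp
    rw [Real.norm_eq_abs, abs_mul, abs_of_pos (by positivity : (0:ℝ) < 1/(2*π))]
    refine mul_le_mul_of_nonneg_left ?_ (by positivity)
    exact G_core_ub hr hl hlr hl2 hx0 hx0' hp1 hp2 hx1 hx1' hp3 hp4 (fun h => hpne h)
  have hGint : ∀ x ∈ Q, IntegrableOn (fun y => G x y) Q volume := by
    intro x hx
    have h := (integrableOn_Rect r (r+l) 0 l _).mpr (hGS x hx)
    have heq : (fun y : Pt => (1/(2*π)) * Real.log
        (Real.sqrt ((x 0 + (Tmap y).1)^2 + (x 1 - (Tmap y).2)^2) /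
          Real.sqrt ((x 0 - (Tmap y).1)^2 + (x 1 - (Tmap y).2)^2))) = fun y => G x y := by
      funext y
      rw [Tmap_apply]
      exact (G_eq x y).symm
    rw [hQ_def, ← heq]
    exact h
  -- lower bound for the inner integral
  have hIQlb : ∀ x ∈ Q, (l*l) * Lb ≤ ∫ y in Q, G x y := by
    intro x hx
    obtain ⟨hx0, hx0', hx1, hx1'⟩ := hx
    have hxne : ∀ᵐ y : Pt ∂volume, y ≠ x := by
      rw [ae_iff]
      simpa [not_not] using volume_singleton_pt x
    have hmono : ∫ y in Q, Lb ≤ ∫ y in Q, G x y := by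
      refine setIntegral_mono_ae_restrict (integrableOn_const hQfin.ne)
        (hGint x ⟨hx0, hx0', hx1, hx1'⟩) ?_
      filter_upwards [ae_restrict_mem hQmeas, ae_restrict_of_ae hxne] with y hy hyne
      obtain ⟨hy0, hy0', hy1, hy1'⟩ := hy
      rw [G_eq, hLb_def]
      refine mul_le_mul_of_nonneg_left ?_ (by positivity)
      refine G_core_lb hr hl hl2 hx0 hx0' hy0 hy0' hx1 hx1' hy1 hy1' ?_
      rw [← dist_coords]
      exact dist_ne_zero.mpr hyne.symm
    calc (l*l) * Lb = ∫ y in Q, Lb := by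
          rw [MeasureTheory.setIntegral_const, measureReal_def, hvolQt, smul_eq_mul]
      _ ≤ _ := hmono
  -- upper bound for the inner integral
  set MQ := (1/(2*π)) * (CR * (l*l) + Bconst * l) with hMQ_def
  have hAfstint : ∀ t : ℝ, IntegrableOn (fun p : ℝ × ℝ => abs (Real.log (abs (t - p.1)))) S volume := by
    intro t
    rw [hS_def, IntegrableOn, Measure.volume_eq_prod, ← Measure.prod_restrict]
    have hone : Integrable (fun _ : ℝ => (1:ℝ)) (volume.restrict (Ioo (0:ℝ) l)) := by
      refine integrableOn_const (C := (1:ℝ)) (lt_top_iff_ne_top.1 ?_)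
      rw [Real.volume_Ioo]
      exact ENNReal.ofReal_lt_top
    have h := (h1D t).mul_prod hone
    simpa using h
  have hIQub : ∀ x ∈ Q, |∫ y in Q, G x y| ≤ MQ := by
    intro x hx
    obtain ⟨hx0, hx0', hx1, hx1'⟩ := hx
    have hmajQ : IntegrableOn (fun y : Pt => (1/(2*π)) * (CR + abs (Real.log (abs (x 0 - y 0))))) Q volume := by
      have h := (integrableOn_Rect r (r+l) 0 l
        (fun p => (1/(2*π)) * (CR + abs (Real.log (abs (x 0 - p.1)))))).mpr (hmajS (x 0))
      rw [hQ_def]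
      exact h
    have hyne0 : ∀ᵐ y : Pt ∂volume, ¬ (y 0 = x 0) := by
      rw [ae_iff]
      simpa [not_not] using volume_line_pt (x 0)
    have h1 : |∫ y in Q, G x y| ≤ ∫ y in Q, |G x y| := by
      simpa [Real.norm_eq_abs] using
        MeasureTheory.norm_integral_le_integral_norm (μ := volume.restrict Q) (fun y => G x y)
    have h2 : ∫ y in Q, |G x y| ≤ ∫ y in Q, (1/(2*π)) * (CR + abs (Real.log (abs (x 0 - y 0)))) := by
      refine setIntegral_mono_ae_restrict (hGint x ⟨hx0, hx0', hx1, hx1'⟩).abs hmajQ ?_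
      filter_upwards [ae_restrict_mem hQmeas, ae_restrict_of_ae hyne0] with y hy hyne
      obtain ⟨hy0, hy0', hy1, hy1'⟩ := hy
      rw [G_eq, abs_mul, abs_of_pos (by positivity : (0:ℝ) < 1/(2*π))]
      refine mul_le_mul_of_nonneg_left ?_ (by positivity)
      exact G_core_ub hr hl hlr hl2 hx0 hx0' hy0 hy0' hx1 hx1' hy1 hy1' hyne
    have h3 : ∫ y in Q, (1/(2*π)) * (CR + abs (Real.log (abs (x 0 - y 0)))) ≤ MQ := by
      have htrans : ∫ y in Q, (1/(2*π)) * (CR + abs (Real.log (abs (x 0 - y 0))))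
          = ∫ p in S, (1/(2*π)) * (CR + abs (Real.log (abs (x 0 - p.1)))) := by
        rw [hQ_def, hS_def]
        exact setIntegral_Rect r (r+l) 0 l
          (fun p => (1/(2*π)) * (CR + abs (Real.log (abs (x 0 - p.1)))))
      rw [htrans]
      have hconstS : IntegrableOn (fun _ : ℝ × ℝ => CR) S volume :=
        integrableOn_const hSfin.ne
      have hsplit : ∫ p in S, (1/(2*π)) * (CR + abs (Real.log (abs (x 0 - p.1))))
          = (1/(2*π)) * ((∫ _ in S, CR) + ∫ p in S, abs (Real.log (abs (x 0 - p.1)))) := by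
        rw [MeasureTheory.integral_const_mul, MeasureTheory.integral_add hconstS (hAfstint (x 0))]
      rw [hsplit, hMQ_def]
      refine mul_le_mul_of_nonneg_left ?_ (by positivity)
      have hc1 : (∫ _ in S, CR) = CR * (l*l) := by
        rw [MeasureTheory.setIntegral_const, measureReal_def, hvolS, ENNReal.toReal_mul,
          ENNReal.toReal_ofReal hl.le, smul_eq_mul, mul_comm]
      have hc2 : ∫ p in S, abs (Real.log (abs (x 0 - p.1))) ≤ Bconst * l := by
        have hrw : (volume : Measure (ℝ × ℝ)).restrict S
            = (volume.restrict (Ioo r (r+l))).prod (volume.restrict (Ioo (0:ℝ) l)) := by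
          rw [hS_def, Measure.volume_eq_prod, Measure.prod_restrict]
        have hval : ∫ p in S, abs (Real.log (abs (x 0 - p.1)))
            = (∫ a in Ioo r (r+l), abs (Real.log (abs (x 0 - a)))) * l := by
          have h2' : (∫ p in S, abs (Real.log (abs (x 0 - p.1))))
              = ∫ p : ℝ × ℝ, abs (Real.log (abs (x 0 - p.1))) * (fun _ : ℝ => (1:ℝ)) p.2
                ∂((volume.restrict (Ioo r (r+l))).prod (volume.restrict (Ioo (0:ℝ) l))) := by
            rw [← hrw]
            simp only [mul_one]
          have h3' := MeasureTheory.integral_prod_mul (μ := volume.restrict (Ioo r (r+l)))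
            (ν := volume.restrict (Ioo (0:ℝ) l))
            (f := fun a => abs (Real.log (abs (x 0 - a)))) (g := fun _ : ℝ => (1:ℝ))
          rw [h2', h3']
          congr 1
          rw [MeasureTheory.integral_const]
          simp [Real.volume_Ioo, ENNReal.toReal_ofReal hl.le, hl.le]
        have hone : (∫ a in Ioo r (r+l), abs (Real.log (abs (x 0 - a)))) ≤ Bconst :=
          oneD_bound (x 0) r (r+l) hx0.le hx0'.le (by linarith)
        calc ∫ p in S, abs (Real.log (abs (x 0 - p.1)))
            = (∫ a in Ioo r (r+l), abs (Real.log (abs (x 0 - a)))) * l := hval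
          _ ≤ Bconst * l := mul_le_mul_of_nonneg_right hone hl.le
      linarith
    linarith [h1, h2, h3]
  -- the Green potential of the test function
  have hGop_eq : ∀ x : Pt, Gop ζ' x = c * ∫ y in Q, G x y := by
    intro x
    rw [Gop]
    have heq : (fun y => G x y * ζ' y) = Q.indicator (fun y => G x y * c) := by
      funext y
      by_cases hy : y ∈ Q
      · rw [Set.indicator_of_mem hy, hζ'_def, Set.indicator_of_mem hy]
      · rw [Set.indicator_of_notMem hy, hζ'_def, Set.indicator_of_notMem hy, mul_zero]
    rw [heq, MeasureTheory.setIntegral_indicator hQmeas, Set.inter_eq_right.mpr hQsubH,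
      MeasureTheory.integral_mul_const, mul_comm]
  have hGopSM : StronglyMeasurable (Gop ζ') := by
    have hFm : Measurable (fun q : Pt × Pt => Function.uncurry G q * ζ' q.2) :=
      measurable_uncurry_G.mul (hζm.comp measurable_snd)
    exact hFm.stronglyMeasurable.integral_prod_right'
  have hGopBd : ∀ x ∈ Q, |Gop ζ' x| ≤ c * MQ := by
    intro x hx
    rw [hGop_eq x, abs_mul, abs_of_pos hc]
    exact mul_le_mul_of_nonneg_left (hIQub x hx) hc.le
  have hφeq : (fun x => ζ' x * Gop ζ' x) = Q.indicator (fun x => c * Gop ζ' x) := by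
    funext x
    by_cases hx : x ∈ Q
    · rw [Set.indicator_of_mem hx, hζ'_def, Set.indicator_of_mem hx]
    · rw [Set.indicator_of_notMem hx, hζ'_def, Set.indicator_of_notMem hx, zero_mul]
  have hGopIntQ : IntegrableOn (fun x => c * Gop ζ' x) Q volume := by
    refine Integrable.mono' (g := fun _ => c * (c * MQ))
      (integrableOn_const hQfin.ne) ((hGopSM.aestronglyMeasurable).const_mul c) ?_
    filter_upwards [ae_restrict_mem hQmeas] with x hx
    rw [Real.norm_eq_abs, abs_mul, abs_of_pos hc]
    exact mul_le_mul_of_nonneg_left (hGopBd x hx) hc.le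
  have hφInt : IntegrableOn (fun x => ζ' x * Gop ζ' x) (Dset r) volume := by
    rw [hφeq]
    exact (hGopIntQ.integrable_indicator hQmeas).integrableOn
  -- lower bound for the quadratic term
  have hI1 : κ^2 * Lb ≤ ∫ x in Dset r, ζ' x * Gop ζ' x := by
    have hlowQ : IntegrableOn (fun _ : Pt => c * (c * ((l*l) * Lb))) Q volume :=
      integrableOn_const hQfin.ne
    have hlow : IntegrableOn (Q.indicator (fun _ : Pt => c * (c * ((l*l) * Lb)))) (Dset r) volume :=
      (hlowQ.integrable_indicator hQmeas).integrableOn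
    have hmono : ∫ x in Dset r, Q.indicator (fun _ : Pt => c * (c * ((l*l) * Lb))) x
        ≤ ∫ x in Dset r, ζ' x * Gop ζ' x := by
      refine setIntegral_mono_on hlow hφInt hDmeas ?_
      intro x hxD
      rw [congrFun hφeq x]
      by_cases hx : x ∈ Q
      · rw [Set.indicator_of_mem hx, Set.indicator_of_mem hx, hGop_eq x]
        refine mul_le_mul_of_nonneg_left ?_ hc.le
        refine mul_le_mul_of_nonneg_left ?_ hc.le
        exact hIQlb x hx
      · rw [Set.indicator_of_notMem hx, Set.indicator_of_notMem hx]
    have hval : ∫ x in Dset r, Q.indicator (fun _ : Pt => c * (c * ((l*l) * Lb))) x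
        = κ^2 * Lb := by
      rw [MeasureTheory.setIntegral_indicator hQmeas, Set.inter_eq_right.mpr hQsubD,
        MeasureTheory.setIntegral_const, measureReal_def, hvolQt, smul_eq_mul]
      have h1 : l * l * (c * (c * (l * l * Lb))) = (c * (l*l)) * (c * (l*l)) * Lb := by ring
      rw [h1, hκeq]
      ring
    linarith [hmono, hval.symm.le, hval.le]
  -- upper bound for the linear term
  have hI2 : ∫ x in Dset r, (x 0) * ζ' x ≤ 2*r*κ := by
    have hψeq : (fun x : Pt => (x 0) * ζ' x) = Q.indicator (fun x : Pt => (x 0) * c) := by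
      funext x
      by_cases hx : x ∈ Q
      · rw [Set.indicator_of_mem hx, hζ'_def, Set.indicator_of_mem hx]
      · rw [Set.indicator_of_notMem hx, hζ'_def, Set.indicator_of_notMem hx, mul_zero]
    rw [hψeq, MeasureTheory.setIntegral_indicator hQmeas, Set.inter_eq_right.mpr hQsubD]
    have hintc : IntegrableOn (fun _ : Pt => (2*r) * c) Q volume :=
      integrableOn_const hQfin.ne
    have hintx : IntegrableOn (fun x : Pt => (x 0) * c) Q volume := by
      refine Integrable.mono' (g := fun _ => (2*r) * c)
        (integrableOn_const hQfin.ne)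
        ((measurable_coord0.mul_const c).aestronglyMeasurable) ?_
      filter_upwards [ae_restrict_mem hQmeas] with x hx
      obtain ⟨h1, h2, _, _⟩ := hx
      rw [Real.norm_eq_abs, abs_mul, abs_of_pos hc, abs_of_pos (lt_trans hr h1)]
      refine mul_le_mul_of_nonneg_right (by linarith) hc.le
    calc ∫ x in Q, (x 0) * c ≤ ∫ _x in Q, (2*r) * c := by
          refine setIntegral_mono_on hintx hintc hQmeas ?_
          intro x hx
          obtain ⟨h1, h2, _, _⟩ := hx
          exact mul_le_mul_of_nonneg_right (by linarith) hc.le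
      _ = 2*r*κ := by
          rw [MeasureTheory.setIntegral_const, measureReal_def, hvolQt, smul_eq_mul]
          have h1 : l * l * (2*r*c) = 2*r*(c*(l*l)) := by ring
          rw [h1, hκeq]
  -- the penalization term
  have hJ : ENNReal.ofReal (ε⁻¹^2) * (∫⁻ x in Dset r, Jconj f (ε^2 * ζ' x))
      ≤ ENNReal.ofReal κ := by
    have hJeq : (fun x => Jconj f (ε^2 * ζ' x)) = Q.indicator (fun _ => Jconj f s) := by
      funext x
      by_cases hx : x ∈ Q
      · rw [Set.indicator_of_mem hx, hζ'_def, Set.indicator_of_mem hx]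
        congr 1
        rw [hc_def]
        field_simp
      · rw [Set.indicator_of_notMem hx, hζ'_def, Set.indicator_of_notMem hx, mul_zero]
        exact Jconj_zero hf hf1
    have hlint : (∫⁻ x in Dset r, Jconj f (ε^2 * ζ' x)) = Jconj f s * volume Q := by
      rw [hJeq, MeasureTheory.lintegral_indicator hQmeas,
        Measure.restrict_restrict hQmeas, Set.inter_eq_left.mpr hQsubD,
        MeasureTheory.setLIntegral_const]
    rw [hlint]
    have hkey : ε⁻¹^2 * (s * (l*l)) = κ := by
      rw [hl_def]
      have h1 : δ * ε * (δ * ε) = δ^2 * ε^2 := by ring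
      rw [h1, hδsq]
      field_simp
    calc ENNReal.ofReal (ε⁻¹^2) * (Jconj f s * volume Q)
        ≤ ENNReal.ofReal (ε⁻¹^2) * (ENNReal.ofReal s *
            (ENNReal.ofReal l * ENNReal.ofReal l)) := by
          refine mul_le_mul_right ?_ _
          exact mul_le_mul' (Jconj_le hf hf1) (le_of_eq hvolQ)
      _ = ENNReal.ofReal (ε⁻¹^2 * (s * (l*l))) := by
          rw [← ENNReal.ofReal_mul hl.le, ← ENNReal.ofReal_mul hs.le,
            ← ENNReal.ofReal_mul (by positivity)]
      _ = ENNReal.ofReal κ := by rw [hkey]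
  -- conclusion
  have henergy : ((κ ^ 2 / (4 * π) * Real.log (1 / ε) - C : ℝ) : EReal)
      ≤ energy f r W ε ζ' := by
    rw [energy]
    have hreal : κ^2/(4*π) * Real.log (1/ε) - C
        ≤ ((1/2) * (∫ x in Dset r, ζ' x * Gop ζ' x) - W * ∫ x in Dset r, (x 0) * ζ' x) - κ := by
      have hP1 : (1/2) * (κ^2 * Lb) ≤ (1/2) * ∫ x in Dset r, ζ' x * Gop ζ' x :=
        mul_le_mul_of_nonneg_left hI1 (by norm_num)
      have hP2 : W * (∫ x in Dset r, (x 0) * ζ' x) ≤ W * (2*r*κ) :=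
        mul_le_mul_of_nonneg_left hI2 hW0.le
      have hlog : Real.log (r/l) = Real.log (1/ε) + (Real.log r - Real.log δ) := by
        rw [hl_def, Real.log_div hr.ne' (by positivity), Real.log_mul hδpos.ne' hε.ne',
          one_div, Real.log_inv]
        ring
      have hLbval : (1/2) * (κ^2 * Lb)
          = κ^2/(4*π) * Real.log (1/ε) + κ^2/(4*π) * (Real.log r - Real.log δ) := by
        rw [hLb_def, hlog]
        field_simp
        ring
      have habs : -(κ^2/(4*π) * |Real.log r - Real.log δ|)
          ≤ κ^2/(4*π) * (Real.log r - Real.log δ) := by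
        have h := neg_abs_le (Real.log r - Real.log δ)
        have hpos : (0:ℝ) ≤ κ^2/(4*π) := by positivity
        nlinarith
      have hWr : W * (2*r*κ) = 2*r*W*κ := by ring
      rw [hC_def]
      linarith
    calc ((κ ^ 2 / (4 * π) * Real.log (1 / ε) - C : ℝ) : EReal)
        ≤ ((((1/2) * (∫ x in Dset r, ζ' x * Gop ζ' x)
            - W * ∫ x in Dset r, (x 0) * ζ' x) - κ : ℝ) : EReal) :=
          EReal.coe_le_coe_iff.mpr hreal
      _ = (((1/2) * (∫ x in Dset r, ζ' x * Gop ζ' x)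
            - W * ∫ x in Dset r, (x 0) * ζ' x : ℝ) : EReal) - ((κ : ℝ) : EReal) := by
          rw [EReal.coe_sub]
      _ ≤ _ := by
          refine EReal.sub_le_sub le_rfl ?_
          calc ((ENNReal.ofReal (ε⁻¹ ^ 2) * ∫⁻ x in Dset r, Jconj f (ε ^ 2 * ζ' x) : ℝ≥0∞) : EReal)
              ≤ ((ENNReal.ofReal κ : ℝ≥0∞) : EReal) :=
                EReal.coe_ennreal_le_coe_ennreal_iff.mpr hJ
            _ = ((κ : ℝ) : EReal) := by
                rw [EReal.coe_ennreal_ofReal, max_eq_left hκ.le]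
  exact le_trans henergy (hmax.2 ζ' hInA)
end
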